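/- Let f and g be orientation-reversing C^∞ diffeomorphisms of ℝ fixing 0 with f∘f = g∘g, and suppose 0 is an interior point of fix(f∘f) (so f is involutive on a neighbourhood of 0). Then there exists h ∈ Diffeo⁺ fixing 0 and commuting with f∘f such that T_0 f = (T_0 g)^(T_0 h), i.e. h∘f and g∘h have equal n-th derivatives at 0 for all n ≥ 1; and hence there exists k ∈ Diffeo⁺ with f = k⁻¹ ∘ g ∘ k. -/

import Mathlib

open Function Filter Set Metric

/-- `f` is a C^∞ diffeomorphism of ℝ: a bijection such that both `f` and its
inverse are infinitely differentiable. -/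
def IsDiffeo (f : ℝ → ℝ) : Prop :=
  Function.Bijective f ∧ ContDiff ℝ (⊤ : ℕ∞) f ∧ ContDiff ℝ (⊤ : ℕ∞) (Function.invFun f)

lemma one_le_inf : (1 : WithTop ℕ∞) ≤ ((⊤:ℕ∞) : WithTop ℕ∞) := by exact_mod_cast le_top

lemma inf_ne_zero : ((⊤:ℕ∞) : WithTop ℕ∞) ≠ 0 := by simp

lemma nonpos_of_antitone_hasDerivAt {f : ℝ → ℝ} {c x : ℝ} (hf : Antitone f)
    (h : HasDerivAt f c x) : c ≤ 0 := by
  have h1 := hasDerivAt_iff_tendsto_slope.1 h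
  refine le_of_tendsto h1 ?_
  filter_upwards [self_mem_nhdsWithin] with y hy
  rw [slope_def_field]
  rcases lt_or_gt_of_ne (show y ≠ x from hy) with hlt | hgt
  · exact div_nonpos_of_nonneg_of_nonpos (by linarith [hf hlt.le]) (by linarith)
  · exact div_nonpos_of_nonpos_of_nonneg (by linarith [hf hgt.le]) (by linarith)

lemma contDiff_invFun_of_deriv_ne {k : ℝ → ℝ} (hbij : Function.Bijective k)
    (hk : ContDiff ℝ (⊤:ℕ∞) k) (hk' : ∀ x, deriv k x ≠ 0) :
    ContDiff ℝ (⊤:ℕ∞) (Function.invFun k) := by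
  rw [contDiff_iff_contDiffAt]
  intro y
  obtain ⟨x, rfl⟩ := hbij.2 y
  have hd : HasDerivAt k (deriv k x) x := (hk.differentiable inf_ne_zero x).hasDerivAt
  set e : ℝ ≃L[ℝ] ℝ := ContinuousLinearEquiv.unitsEquivAut ℝ (Units.mk0 _ (hk' x)) with he
  have hfd : HasFDerivAt k (e : ℝ →L[ℝ] ℝ) x := by
    have hce : (e : ℝ →L[ℝ] ℝ) = ContinuousLinearMap.smulRight (1 : ℝ →L[ℝ] ℝ) (deriv k x) := by
      ext
      simp [he, ContinuousLinearEquiv.unitsEquivAut_apply, mul_comm, smul_eq_mul]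
    rw [hce]
    exact hd.hasFDerivAt
  have H := (hk.contDiffAt (x := x)).to_localInverse (f' := e) hfd inf_ne_zero
  refine H.congr_of_eventuallyEq ?_
  have hev := ((hk.contDiffAt (x := x)).hasStrictFDerivAt' hfd inf_ne_zero).eventually_right_inverse
  filter_upwards [hev] with z hz
  conv_lhs => rw [← hz]
  rw [Function.leftInverse_invFun hbij.1]
  rfl

lemma isDiffeo_deriv_mul {f : ℝ → ℝ} (hf : IsDiffeo f) (x : ℝ) :
    deriv (Function.invFun f) (f x) * deriv f x = 1 := by
  have h1 : HasDerivAt f (deriv f x) x := ((hf.2.1.differentiable inf_ne_zero) x).hasDerivAt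
  have h2 : HasDerivAt (Function.invFun f) (deriv (Function.invFun f) (f x)) (f x) :=
    ((hf.2.2.differentiable inf_ne_zero) (f x)).hasDerivAt
  have h3 := h2.comp x h1
  have h4 : (Function.invFun f) ∘ f = id := funext (Function.leftInverse_invFun hf.1.1)
  rw [h4] at h3
  exact h3.unique (hasDerivAt_id x)

lemma isDiffeo_deriv_ne {f : ℝ → ℝ} (hf : IsDiffeo f) (x : ℝ) : deriv f x ≠ 0 := by
  intro h
  have := isDiffeo_deriv_mul hf x
  rw [h, mul_zero] at this
  norm_num at this

/-- Key gluing lemma: interpolate between `u₀` (near `0`) and the identity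
(away from `0`), keeping the derivative bounded below by `1/2`. -/
lemma glue_exists {u₀ : ℝ → ℝ} (hsm : ContDiff ℝ (⊤:ℕ∞) u₀) (h0 : u₀ 0 = 0)
    (h1 : deriv u₀ 0 = 1) (δ : ℝ) (hδ : 0 < δ) :
    ∃ u : ℝ → ℝ, ∃ a b : ℝ, 0 < a ∧ a < b ∧ b ≤ δ ∧ ContDiff ℝ (⊤:ℕ∞) u ∧
      (∀ x, (1:ℝ)/2 ≤ deriv u x) ∧ (∀ x, |x| ≤ a → u x = u₀ x) ∧
      (∀ x, b ≤ |x| → u x = x) := by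
  classical
  set ρ : ContDiffBump (0:ℝ) := ⟨1/2, 1, by norm_num, by norm_num⟩ with hρdef
  have hρc : ContDiff ℝ (⊤:ℕ∞) ρ := ρ.contDiff
  have hρd : Differentiable ℝ ρ := hρc.differentiable inf_ne_zero
  have hρderivC : Continuous (deriv (ρ : ℝ → ℝ)) := hρc.continuous_deriv one_le_inf
  obtain ⟨t0, _, ht0'⟩ := (isCompact_Icc (a := (-2:ℝ)) (b := 2)).exists_isMaxOn
    (by norm_num : (Icc (-2:ℝ) 2).Nonempty)
    (continuous_abs.comp hρderivC).continuousOn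
  have ht0 : ∀ t ∈ Icc (-2:ℝ) 2, |deriv (ρ : ℝ → ℝ) t| ≤ |deriv (ρ : ℝ → ℝ) t0| :=
    fun t ht => ht0' ht
  set C := |deriv (ρ : ℝ → ℝ) t0| with hC
  have hC0 : 0 ≤ C := abs_nonneg _
  have hCb : ∀ t, |deriv (ρ : ℝ → ℝ) t| ≤ C := by
    intro t
    rcases le_or_gt |t| 2 with h | h
    · exact ht0 t (abs_le.1 h)
    · have hz : deriv (ρ : ℝ → ℝ) t = 0 := by
        have hev : (ρ : ℝ → ℝ) =ᶠ[nhds t] (fun _ => (0:ℝ)) := by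
          have : {s : ℝ | 1 < |s|} ∈ nhds t := by
            refine IsOpen.mem_nhds ?_ (by simp; linarith)
            have : {s : ℝ | 1 < |s|} = abs ⁻¹' (Ioi 1) := rfl
            rw [this]; exact isOpen_Ioi.preimage continuous_abs
          filter_upwards [this] with s hs
          exact ρ.zero_of_le_dist (by simpa [Real.dist_eq] using le_of_lt hs)
        rw [hev.deriv_eq, deriv_const]
      rw [hz]; simpa using hC0
  set v : ℝ → ℝ := fun x => u₀ x - x with hv
  have hvsm : ContDiff ℝ (⊤:ℕ∞) v := hsm.sub contDiff_id
  have hvd : Differentiable ℝ v := hvsm.differentiable inf_ne_zero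
  have hvderiv : ∀ x, deriv v x = deriv u₀ x - 1 := by
    intro x
    rw [hv]
    rw [deriv_fun_sub ((hsm.differentiable inf_ne_zero) x) differentiableAt_fun_id]
    simp
  have hvd0 : deriv v 0 = 0 := by rw [hvderiv, h1]; ring
  have hvderivC : Continuous (deriv v) := hvsm.continuous_deriv one_le_inf
  set η : ℝ := 1/(2*(C+1)) with hη
  have hηpos : 0 < η := by positivity
  have hcont : ContinuousAt (deriv v) 0 := hvderivC.continuousAt
  rw [Metric.continuousAt_iff] at hcont
  obtain ⟨ε, hεpos, hε⟩ := hcont η hηpos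
  set b : ℝ := min (ε/2) δ with hb
  have hbpos : 0 < b := by positivity
  have hbδ : b ≤ δ := min_le_right _ _
  have hvb : ∀ t, |t| ≤ b → |deriv v t| ≤ η := by
    intro t ht
    have : dist t 0 < ε := by
      rw [Real.dist_eq, sub_zero]
      calc |t| ≤ b := ht
        _ ≤ ε/2 := min_le_left _ _
        _ < ε := by linarith
    have := hε this
    rw [Real.dist_eq, hvd0, sub_zero] at this
    exact this.le
  have hvval : ∀ x, |x| ≤ b → |v x| ≤ η * b := by
    intro x hx
    have := Convex.norm_image_sub_le_of_norm_deriv_le (f := v) (C := η)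
      (fun t _ => hvd t) (fun t ht => by
        rw [Real.norm_eq_abs]
        exact hvb t (abs_le.2 ht)) (convex_Icc (-b) b)
      (by constructor <;> [linarith; linarith] : (0:ℝ) ∈ Icc (-b) b)
      (abs_le.1 hx)
    rw [hv] at this
    simp only [h0, sub_zero] at this
    have h2 : |v x| ≤ η * |x| := by
      simpa [Real.norm_eq_abs, hv, h0] using this
    calc |v x| ≤ η * |x| := h2
      _ ≤ η * b := by nlinarith
  refine ⟨fun x => x + ρ (x/b) * v x, b/2, b, by positivity, by linarith, hbδ, ?_, ?_, ?_, ?_⟩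
  · exact contDiff_id.add ((hρc.comp (contDiff_id.div_const b)).mul hvsm)
  · intro x
    have hρx : HasDerivAt (fun y : ℝ => ρ (y/b)) (deriv (ρ : ℝ → ℝ) (x/b) / b) x := by
      have h1' : HasDerivAt (ρ : ℝ → ℝ) (deriv (ρ : ℝ → ℝ) (x/b)) (x/b) := (hρd _).hasDerivAt
      have h2' : HasDerivAt (fun y : ℝ => y/b) (1/b) x := (hasDerivAt_id x).div_const b
      have := h1'.comp x h2'
      simpa [div_eq_mul_inv, mul_comm, Function.comp_def] using this
    have hvx : HasDerivAt v (deriv v x) x := (hvd x).hasDerivAt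
    have hux : HasDerivAt (fun x => x + ρ (x/b) * v x)
        (1 + (deriv (ρ : ℝ → ℝ) (x/b) / b * v x + ρ (x/b) * deriv v x)) x :=
      (hasDerivAt_id x).add (hρx.mul hvx)
    rw [hux.deriv]
    rcases le_or_gt |x| b with hxb | hxb
    · have e1 : |deriv (ρ : ℝ → ℝ) (x/b) / b * v x| ≤ C / b * (η * b) := by
        rw [abs_mul, abs_div]
        gcongr
        · exact hCb _
        · rw [abs_of_pos hbpos]
        · exact hvval x hxb
      have e2 : |ρ (x/b) * deriv v x| ≤ 1 * η := by
        rw [abs_mul]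
        gcongr
        · rw [abs_of_nonneg ρ.nonneg]; exact ρ.le_one
        · exact hvb x hxb
      have e3 : C / b * (η * b) = C * η := by field_simp
      have : |deriv (ρ : ℝ → ℝ) (x/b) / b * v x + ρ (x/b) * deriv v x| ≤ (C+1) * η := by
        calc _ ≤ _ := abs_add_le _ _
          _ ≤ C / b * (η * b) + 1 * η := add_le_add e1 e2
          _ = (C+1) * η := by rw [e3]; ring
      have hCη : (C+1) * η = 1/2 := by rw [hη]; field_simp
      rw [hCη] at this
      have := (abs_le.1 this).1
      linarith
    · have hz1 : ρ (x/b) = 0 := by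
        refine ρ.zero_of_le_dist ?_
        simp only [dist_zero_right, Real.norm_eq_abs, abs_div, abs_of_pos hbpos]
        rw [le_div_iff₀ hbpos]; linarith
      have hz2 : deriv (ρ : ℝ → ℝ) (x/b) = 0 := by
        have hev : (ρ : ℝ → ℝ) =ᶠ[nhds (x/b)] (fun _ => (0:ℝ)) := by
          have hmem : {s : ℝ | 1 < |s|} ∈ nhds (x/b) := by
            refine IsOpen.mem_nhds ?_ ?_
            · have : {s : ℝ | 1 < |s|} = abs ⁻¹' (Ioi 1) := rfl
              rw [this]; exact isOpen_Ioi.preimage continuous_abs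
            · simp only [mem_setOf_eq, abs_div, abs_of_pos hbpos]
              rw [lt_div_iff₀ hbpos]; linarith
          filter_upwards [hmem] with s hs
          exact ρ.zero_of_le_dist (by simpa [Real.dist_eq] using le_of_lt hs)
        rw [hev.deriv_eq, deriv_const]
      rw [hz1, hz2]
      norm_num
  · intro x hx
    have : ρ (x/b) = 1 := by
      refine ρ.one_of_mem_closedBall ?_
      simp only [Metric.mem_closedBall, dist_zero_right, Real.norm_eq_abs, abs_div,
        abs_of_pos hbpos]
      rw [div_le_iff₀ hbpos]
      calc |x| ≤ b/2 := hx
        _ = 1/2 * b := by ring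
    show x + ρ (x/b) * v x = u₀ x
    rw [this, hv]; ring
  · intro x hx
    have : ρ (x/b) = 0 := by
      refine ρ.zero_of_le_dist ?_
      simp only [dist_zero_right, Real.norm_eq_abs, abs_div, abs_of_pos hbpos]
      rw [le_div_iff₀ hbpos]; linarith
    show x + ρ (x/b) * v x = x
    rw [this]; ring

theorem conjugacy_when_square_involutive_near_zero
    (f g : ℝ → ℝ) (hf : IsDiffeo f) (hg : IsDiffeo g)
    (hfa : StrictAnti f) (hga : StrictAnti g)
    (hf0 : f 0 = 0) (hg0 : g 0 = 0)
    (hsq : f ∘ f = g ∘ g)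
    (hint : (0 : ℝ) ∈ interior {x : ℝ | (f ∘ f) x = x}) :
    (∃ h : ℝ → ℝ, IsDiffeo h ∧ StrictMono h ∧ h 0 = 0 ∧
      h ∘ (f ∘ f) = (f ∘ f) ∘ h ∧
      ∀ n : ℕ, 1 ≤ n → iteratedDeriv n (h ∘ f) 0 = iteratedDeriv n (g ∘ h) 0) ∧
    (∃ k : ℝ → ℝ, IsDiffeo k ∧ StrictMono k ∧ f = Function.invFun k ∘ g ∘ k) := by
  classical
  have hfsm := hf.2.1
  have hgsm := hg.2.1
  have hfd : Differentiable ℝ f := hfsm.differentiable inf_ne_zero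
  have hgd : Differentiable ℝ g := hgsm.differentiable inf_ne_zero
  have hfL : ∀ x, Function.invFun f (f x) = x := fun x => Function.leftInverse_invFun hf.1.1 x
  have hfR : ∀ y, f (Function.invFun f y) = y := fun y => Function.rightInverse_invFun hf.1.2 y
  have hgR : ∀ y, g (Function.invFun g y) = y := fun y => Function.rightInverse_invFun hg.1.2 y
  -- the square
  have hsq' : ∀ z, g (g z) = f (f z) := by
    intro z
    have : (f ∘ f) z = (g ∘ g) z := by rw [hsq]
    simpa using this.symm
  -- fixed interval of f ∘ f
  obtain ⟨δ₀, hδ₀pos, hball⟩ := Metric.mem_nhds_iff.1 (mem_interior_iff_mem_nhds.1 hint)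
  have hfix : ∀ x : ℝ, |x| < δ₀ → f (f x) = x := by
    intro x hx
    have : x ∈ {x : ℝ | (f ∘ f) x = x} := hball (by simpa [Real.dist_eq, mem_ball] using hx)
    exact this
  have hgfix : ∀ x : ℝ, |x| < δ₀ → g (g x) = x := by
    intro x hx
    rw [hsq']; exact hfix x hx
  -- sign facts
  have hfneg : ∀ x : ℝ, 0 < x → f x < 0 := fun x hx => by
    have := hfa hx; rwa [hf0] at this
  have hfpos : ∀ x : ℝ, x < 0 → 0 < f x := fun x hx => by
    have := hfa hx; rwa [hf0] at this
  -- derivatives at 0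
  have hderiv0 : ∀ h : ℝ → ℝ, Differentiable ℝ h → StrictAnti h → h 0 = 0 →
      (∀ x : ℝ, |x| < δ₀ → h (h x) = x) → deriv h 0 = -1 := by
    intro h hd ha h0 hfixh
    have hev : (h ∘ h) =ᶠ[nhds 0] id := by
      filter_upwards [Metric.ball_mem_nhds (0:ℝ) hδ₀pos] with x hx
      exact hfixh x (by simpa [Real.dist_eq, mem_ball] using hx)
    have hD : deriv (h ∘ h) 0 = 1 := by rw [hev.deriv_eq]; exact deriv_id 0
    have hchain : HasDerivAt (h ∘ h) (deriv h (h 0) * deriv h 0) 0 :=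
      ((hd (h 0)).hasDerivAt).comp 0 ((hd 0).hasDerivAt)
    rw [h0] at hchain
    have h2 : deriv h 0 * deriv h 0 = 1 := by rw [← hD]; exact hchain.deriv.symm
    have h3 : deriv h 0 ≤ 0 := nonpos_of_antitone_hasDerivAt ha.antitone (hd 0).hasDerivAt
    nlinarith [h2, h3]
  have hdf0 : deriv f 0 = -1 := hderiv0 f hfd hfa hf0 hfix
  have hdg0 : deriv g 0 = -1 := hderiv0 g hgd hga hg0 hgfix
  -- φ and ψ
  set φ : ℝ → ℝ := fun x => (x - f x)/2 with hφdef
  set ψ : ℝ → ℝ := fun x => (x - g x)/2 with hψdef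
  have hφsm : ContDiff ℝ (⊤:ℕ∞) φ := (contDiff_id.sub hfsm).div_const 2
  have hψsm : ContDiff ℝ (⊤:ℕ∞) ψ := (contDiff_id.sub hgsm).div_const 2
  have hφderiv : ∀ x, deriv φ x = (1 - deriv f x)/2 := by
    intro x
    rw [hφdef]
    rw [deriv_div_const, deriv_fun_sub differentiableAt_fun_id (hfd x), deriv_id'']
  have hψderiv : ∀ x, deriv ψ x = (1 - deriv g x)/2 := by
    intro x
    rw [hψdef]
    rw [deriv_div_const, deriv_fun_sub differentiableAt_fun_id (hgd x), deriv_id'']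
  have hφ0 : φ 0 = 0 := by simp [hφdef, hf0]
  have hψ0 : ψ 0 = 0 := by simp [hψdef, hg0]
  have hφd0 : deriv φ 0 = 1 := by rw [hφderiv, hdf0]; norm_num
  have hψd0 : deriv ψ 0 = 1 := by rw [hψderiv, hdg0]; norm_num
  have hψdpos : ∀ x, (1:ℝ)/2 ≤ deriv ψ x := by
    intro x
    have := nonpos_of_antitone_hasDerivAt hga.antitone (hgd x).hasDerivAt
    rw [hψderiv]
    linarith
  have hψmono : StrictMono ψ := by
    apply strictMono_of_deriv_pos
    intro x
    linarith [hψdpos x]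
  have hψsurj : Function.Surjective ψ := by
    apply Continuous.surjective hψsm.continuous
    · apply tendsto_atTop_mono' atTop (f₁ := fun x : ℝ => x/2)
      · filter_upwards [eventually_ge_atTop (0:ℝ)] with x hx
        have : g x ≤ 0 := by rw [← hg0]; exact hga.antitone hx
        rw [hψdef]
        dsimp only
        linarith
      · exact Tendsto.atTop_div_const (by norm_num) tendsto_id
    · apply tendsto_atBot_mono' atBot (f₁ := fun x : ℝ => x/2)
      · filter_upwards [eventually_le_atBot (0:ℝ)] with x hx
        have : 0 ≤ g x := by rw [← hg0]; exact hga.antitone hx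
        rw [hψdef]
        dsimp only
        linarith
      · exact Tendsto.atBot_div_const (by norm_num) tendsto_id
  have hψbij : Function.Bijective ψ := ⟨hψmono.injective, hψsurj⟩
  have hψdiffeo : IsDiffeo ψ :=
    ⟨hψbij, hψsm, contDiff_invFun_of_deriv_ne hψbij hψsm (fun x => by linarith [hψdpos x])⟩
  set ψinv := Function.invFun ψ with hψinvdef
  have hψinvsm : ContDiff ℝ (⊤:ℕ∞) ψinv := hψdiffeo.2.2
  have hψL : ∀ x, ψinv (ψ x) = x := fun x => Function.leftInverse_invFun hψbij.1 x
  have hψR : ∀ y, ψ (ψinv y) = y := fun y => Function.rightInverse_invFun hψbij.2 y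
  -- u₀
  set u₀ : ℝ → ℝ := fun x => ψinv (φ x) with hu₀def
  have hu₀sm : ContDiff ℝ (⊤:ℕ∞) u₀ := hψinvsm.comp hφsm
  have hψinv0 : ψinv 0 = 0 := by have := hψL 0; rwa [hψ0] at this
  have hu₀0 : u₀ 0 = 0 := by rw [hu₀def]; dsimp only; rw [hφ0, hψinv0]
  have hu₀d : deriv u₀ 0 = 1 := by
    have h1 : HasDerivAt φ 1 0 := by
      rw [← hφd0]; exact (hφsm.differentiable inf_ne_zero 0).hasDerivAt
    have h2' : deriv ψinv 0 = 1 := by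
      have := isDiffeo_deriv_mul hψdiffeo 0
      rw [hψ0, hψd0, mul_one] at this
      exact this
    have h2 : HasDerivAt ψinv 1 (φ 0) := by
      rw [hφ0, ← h2']
      exact (hψinvsm.differentiable inf_ne_zero 0).hasDerivAt
    have h3 : HasDerivAt (ψinv ∘ φ) (1 * 1) 0 := HasDerivAt.comp 0 h2 h1
    have h4 := h3.deriv
    rw [hu₀def]
    simpa [Function.comp_def] using h4
  -- local conjugacy near 0
  obtain ⟨r₁, hr₁pos, hr₁⟩ :=
    Metric.continuousAt_iff.1 (hu₀sm.continuous.continuousAt (x := 0)) δ₀ hδ₀pos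
  set r := min r₁ δ₀ with hrdef
  have hrpos : 0 < r := lt_min hr₁pos hδ₀pos
  have hu₀small : ∀ x, |x| < r → |u₀ x| < δ₀ := by
    intro x hx
    have h1 : dist x 0 < r₁ := by
      rw [Real.dist_eq, sub_zero]; exact lt_of_lt_of_le hx (min_le_left _ _)
    have := hr₁ h1
    rwa [Real.dist_eq, hu₀0, sub_zero] at this
  have hconj : ∀ x, |x| < r → u₀ (f x) = g (u₀ x) := by
    intro x hx
    have hxδ : |x| < δ₀ := lt_of_lt_of_le hx (min_le_right _ _)
    apply hψmono.injective
    have e1 : ψ (u₀ (f x)) = φ (f x) := by rw [hu₀def]; exact hψR _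
    have e2 : φ (f x) = - φ x := by
      rw [hφdef]; dsimp only; rw [hfix x hxδ]; ring
    have e3 : ψ (g (u₀ x)) = - ψ (u₀ x) := by
      rw [hψdef]; dsimp only; rw [hgfix (u₀ x) (hu₀small x hx)]; ring
    have e4 : ψ (u₀ x) = φ x := hψR _
    rw [e1, e2, e3, e4]
  -- glue u₀ with identity
  obtain ⟨u, a, b, hapos, hab, hbδ, husm, huderiv, hua, hub⟩ :=
    glue_exists hu₀sm hu₀0 hu₀d (δ₀/2) (by linarith)
  have hud : Differentiable ℝ u := husm.differentiable inf_ne_zero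
  have humono : StrictMono u := by
    apply strictMono_of_deriv_pos
    intro x
    linarith [huderiv x]
  have hu0 : u 0 = 0 := by
    rw [hua 0 (by simp [le_of_lt hapos]), hu₀0]
  have hbpos : 0 < b := lt_trans hapos hab
  have hub' : u b = b := hub b (by rw [abs_of_pos hbpos])
  -- u commutes with f ∘ f on [0, ∞)
  have hcommute : ∀ y : ℝ, 0 ≤ y → u (f (f y)) = f (f (u y)) := by
    intro y hy
    have hsmono : StrictMono (fun z => f (f z)) := fun z w h => hfa (hfa h)
    rcases le_or_gt y (δ₀/2) with h1 | h1
    · have hyfix : f (f y) = y := hfix y (by rw [abs_of_nonneg hy]; linarith)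
      have huy1 : 0 ≤ u y := by rw [← hu0]; exact humono.monotone hy
      have huy2 : u y ≤ δ₀/2 := by
        rcases le_or_gt y b with h2 | h2
        · have := humono.monotone h2
          rw [hub'] at this
          linarith
        · rw [hub y (by rw [abs_of_nonneg hy]; linarith)]
          exact h1
      have huyfix : f (f (u y)) = u y := hfix (u y) (by rw [abs_of_nonneg huy1]; linarith)
      rw [hyfix, huyfix]
    · have hy1 : u y = y := hub y (by rw [abs_of_nonneg hy]; linarith)
      have h2 : δ₀/2 < f (f y) := by
        have := hsmono h1
        have hfixh : f (f (δ₀/2)) = δ₀/2 := hfix _ (by rw [abs_of_pos (by linarith)]; linarith)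
        dsimp at this
        linarith [hfixh ▸ this]
      have hy2 : u (f (f y)) = f (f y) := hub _ (by rw [abs_of_pos (by linarith)]; linarith)
      rw [hy1, hy2]
  -- the conjugating map k
  set k : ℝ → ℝ := fun x => if 0 ≤ x then u x else g (u (Function.invFun f x)) with hkdef
  have hk0 : k 0 = 0 := by rw [hkdef]; simp [hu0]
  have hFanti : StrictAnti (Function.invFun f) := by
    intro x y hxy
    rcases lt_trichotomy (Function.invFun f y) (Function.invFun f x) with h | h | h
    · exact h
    · exfalso
      have := congrArg f h
      rw [hfR, hfR] at this
      exact absurd this.symm (ne_of_lt hxy)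
    · exfalso
      have := hfa h
      rw [hfR, hfR] at this
      exact absurd hxy (not_lt.2 this.le)
  have hFpos : ∀ x : ℝ, x < 0 → 0 < Function.invFun f x := by
    intro x hx
    by_contra hcon
    push_neg at hcon
    have : 0 ≤ f (Function.invFun f x) := by
      rcases eq_or_lt_of_le hcon with h | h
      · rw [h, hf0]
      · exact (hfpos _ h).le
    rw [hfR] at this
    linarith
  -- the conjugacy equation
  have hkf : ∀ x, k (f x) = g (k x) := by
    intro x
    rcases lt_trichotomy x 0 with hx | hx | hx
    · -- x < 0
      have hfx : 0 < f x := hfpos x hx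
      have hy : 0 < Function.invFun f x := hFpos x hx
      have e1 : k (f x) = u (f x) := by rw [hkdef]; simp [hfx.le]
      have e2 : k x = g (u (Function.invFun f x)) := by rw [hkdef]; simp [not_le.2 hx]
      rw [e1, e2, hsq' (u (Function.invFun f x)), ← hcommute _ hy.le]
      have : f (f (Function.invFun f x)) = f x := by rw [hfR]
      rw [this]
    · subst hx
      rw [hf0, hk0, hg0]
    · -- 0 < x
      have hfx : f x < 0 := hfneg x hx
      have e1 : k (f x) = g (u (Function.invFun f (f x))) := by
        rw [hkdef]; simp [not_le.2 hfx]
      have e2 : k x = u x := by rw [hkdef]; simp [hx.le]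
      rw [e1, e2, hfL]
  -- k agrees with u near 0
  obtain ⟨r₂, hr₂pos, hr₂⟩ :=
    Metric.continuousAt_iff.1 (hfsm.continuous.continuousAt (x := 0)) a hapos
  set ε : ℝ := min (min a r) (min r₂ δ₀) with hεdef
  have hεpos : 0 < ε := by
    apply lt_min (lt_min hapos hrpos) (lt_min hr₂pos hδ₀pos)
  have hεa : ε ≤ a := le_trans (min_le_left _ _) (min_le_left _ _)
  have hεr : ε ≤ r := le_trans (min_le_left _ _) (min_le_right _ _)
  have hεr₂ : ε ≤ r₂ := le_trans (min_le_right _ _) (min_le_left _ _)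
  have hεδ₀ : ε ≤ δ₀ := le_trans (min_le_right _ _) (min_le_right _ _)
  have hknearu : ∀ x, |x| < ε → k x = u x := by
    intro x hx
    rcases le_or_gt 0 x with hx0 | hx0
    · rw [hkdef]; simp [hx0]
    · have hxδ : |x| < δ₀ := lt_of_lt_of_le hx hεδ₀
      have hFx : Function.invFun f x = f x := by
        have h1 : f (f x) = x := hfix x hxδ
        conv_lhs => rw [← h1]
        rw [hfL]
      have hfxa : |f x| < a := by
        have : dist x 0 < r₂ := by
          rw [Real.dist_eq, sub_zero]; exact lt_of_lt_of_le hx hεr₂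
        have := hr₂ this
        rwa [Real.dist_eq, hf0, sub_zero] at this
      have e1 : k x = g (u (f x)) := by rw [hkdef]; simp [not_le.2 hx0, hFx]
      rw [e1, hua (f x) hfxa.le, hconj x (lt_of_lt_of_le hx hεr),
        hsq' (u₀ x), hfix (u₀ x) (hu₀small x (lt_of_lt_of_le hx hεr)),
        hua x (le_of_lt (lt_of_lt_of_le hx hεa))]
  have hkevu : k =ᶠ[nhds 0] u := by
    filter_upwards [Metric.ball_mem_nhds (0:ℝ) hεpos] with x hx
    exact hknearu x (by simpa [Real.dist_eq, mem_ball] using hx)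
  -- smoothness of k
  have hAsm : ContDiff ℝ (⊤:ℕ∞) (fun x => g (u (Function.invFun f x))) :=
    hgsm.comp (husm.comp hf.2.2)
  have hksm : ContDiff ℝ (⊤:ℕ∞) k := by
    rw [contDiff_iff_contDiffAt]
    intro x
    rcases lt_trichotomy x 0 with hx | hx | hx
    · apply hAsm.contDiffAt.congr_of_eventuallyEq
      filter_upwards [IsOpen.mem_nhds isOpen_Iio hx] with y hy
      rw [hkdef]; simp [not_le.2 (mem_Iio.1 hy)]
    · subst hx
      exact husm.contDiffAt.congr_of_eventuallyEq hkevu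
    · apply husm.contDiffAt.congr_of_eventuallyEq
      filter_upwards [IsOpen.mem_nhds isOpen_Ioi hx] with y hy
      rw [hkdef]; simp [le_of_lt (mem_Ioi.1 hy)]
  -- strict monotonicity of k
  have hkmono : StrictMono k := by
    intro x y hxy
    rcases le_or_gt 0 x with hx | hx
    · have hy : 0 ≤ y := le_trans hx hxy.le
      have e1 : k x = u x := by rw [hkdef]; simp [hx]
      have e2 : k y = u y := by rw [hkdef]; simp [hy]
      rw [e1, e2]; exact humono hxy
    · have e1 : k x = g (u (Function.invFun f x)) := by rw [hkdef]; simp [not_le.2 hx]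
      have hkxneg : k x < 0 := by
        rw [e1, ← hg0]
        apply hga
        rw [← hu0]
        exact humono (hFpos x hx)
      rcases le_or_gt 0 y with hy | hy
      · have e2 : k y = u y := by rw [hkdef]; simp [hy]
        have : 0 ≤ u y := by rw [← hu0]; exact humono.monotone hy
        rw [e2]; linarith
      · have e2 : k y = g (u (Function.invFun f y)) := by rw [hkdef]; simp [not_le.2 hy]
        rw [e1, e2]
        apply hga
        exact humono (hFanti hxy)
  -- derivative of k nonzero
  have hFderiv_ne : ∀ x, deriv (Function.invFun f) x ≠ 0 := by
    intro x
    have := isDiffeo_deriv_mul hf (Function.invFun f x)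
    rw [hfR] at this
    exact left_ne_zero_of_mul_eq_one this
  have hkderiv : ∀ x, deriv k x ≠ 0 := by
    intro x
    rcases lt_trichotomy x 0 with hx | hx | hx
    · have hev : k =ᶠ[nhds x] (fun x => g (u (Function.invFun f x))) := by
        filter_upwards [IsOpen.mem_nhds isOpen_Iio hx] with y hy
        rw [hkdef]; simp [not_le.2 (mem_Iio.1 hy)]
      rw [hev.deriv_eq]
      have hF : HasDerivAt (Function.invFun f) (deriv (Function.invFun f) x) x :=
        (hf.2.2.differentiable inf_ne_zero x).hasDerivAt
      have hu' : HasDerivAt u (deriv u (Function.invFun f x)) (Function.invFun f x) :=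
        (hud _).hasDerivAt
      have hg' : HasDerivAt g (deriv g (u (Function.invFun f x))) (u (Function.invFun f x)) :=
        (hgd _).hasDerivAt
      have hcomp : HasDerivAt (fun x => g (u (Function.invFun f x)))
          (deriv g (u (Function.invFun f x)) *
            (deriv u (Function.invFun f x) * deriv (Function.invFun f) x)) x :=
        hg'.comp x (hu'.comp x hF)
      rw [hcomp.deriv]
      apply mul_ne_zero
      · exact isDiffeo_deriv_ne hg _
      · apply mul_ne_zero
        · intro hcon
          have := huderiv (Function.invFun f x)
          rw [hcon] at this
          norm_num at this
        · exact hFderiv_ne x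
    · subst hx
      rw [hkevu.deriv_eq]
      intro hcon
      have := huderiv 0
      rw [hcon] at this
      norm_num at this
    · have hev : k =ᶠ[nhds x] u := by
        filter_upwards [IsOpen.mem_nhds isOpen_Ioi hx] with y hy
        rw [hkdef]; simp [le_of_lt (mem_Ioi.1 hy)]
      rw [hev.deriv_eq]
      intro hcon
      have := huderiv x
      rw [hcon] at this
      norm_num at this
  -- surjectivity of k
  have hksurj : Function.Surjective k := by
    apply Continuous.surjective hksm.continuous
    · apply Tendsto.congr' (f₁ := id) _ tendsto_id
      filter_upwards [eventually_ge_atTop b] with x hx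
      rw [hkdef]
      have h0x : 0 ≤ x := le_trans hbpos.le hx
      simp only [h0x, if_pos]
      rw [hub x (by rw [abs_of_nonneg h0x]; exact hx)]
      rfl
    · have T1 : Tendsto (Function.invFun f) atBot atTop := by
        rw [Filter.tendsto_atTop]
        intro M
        filter_upwards [eventually_le_atBot (f M)] with x hx
        calc M = Function.invFun f (f M) := (hfL M).symm
          _ ≤ Function.invFun f x := hFanti.antitone hx
      have T2 : Tendsto u atTop atTop := by
        apply Tendsto.congr' (f₁ := id) _ tendsto_id
        filter_upwards [eventually_ge_atTop b] with x hx
        exact (hub x (by rw [abs_of_nonneg (le_trans hbpos.le hx)]; exact hx)).symm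
      have T3 : Tendsto g atTop atBot := by
        rw [Filter.tendsto_atBot]
        intro M
        filter_upwards [eventually_ge_atTop (Function.invFun g M)] with x hx
        calc g x ≤ g (Function.invFun g M) := hga.antitone hx
          _ = M := hgR M
      have T := T3.comp (T2.comp T1)
      apply Tendsto.congr' _ T
      filter_upwards [eventually_le_atBot (-1 : ℝ)] with x hx
      rw [hkdef]
      simp only [Function.comp]
      rw [if_neg (not_le.2 (by linarith : x < 0))]
  have hkbij : Function.Bijective k := ⟨hkmono.injective, hksurj⟩
  have hkdiffeo : IsDiffeo k := ⟨hkbij, hksm, contDiff_invFun_of_deriv_ne hkbij hksm hkderiv⟩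
  have hkconj : k ∘ f = g ∘ k := funext hkf
  refine ⟨⟨k, hkdiffeo, hkmono, hk0, ?_, ?_⟩, ⟨k, hkdiffeo, hkmono, ?_⟩⟩
  · funext x
    show k (f (f x)) = f (f (k x))
    rw [hkf (f x), hkf x, hsq' (k x)]
  · intro n _
    rw [hkconj]
  · funext x
    show f x = Function.invFun k (g (k x))
    rw [← hkf x, Function.leftInverse_invFun hkbij.1]
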